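/- Let (X,T) be a dynamical system where X is a compact metric space and T : X → X a homeomorphism. If the set of aperiodic points of T is dense in X, then there exists a nowhere dense subset A of X that intersects every periodic orbit of T. -/

import Mathlib

open Topology

open Metric

lemma key0 {X : Type*} [MetricSpace X] (T : X ≃ₜ X)
    (hdense : Dense {x : X | ∀ n : ℕ, 1 ≤ n → (⇑T)^[n] x ≠ x})
    (c : X) (r : ℝ) (hr : 0 < r) (N : ℕ) :
    ∃ y : X, ∃ δ : ℝ, 0 < δ ∧ Metric.ball y δ ⊆ Metric.ball c r ∧
      ∀ z ∈ Metric.ball y δ, ∀ z' ∈ Metric.ball y δ, ∀ a ≤ N, ∀ b ≤ N,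
        (⇑T)^[a] z = (⇑T)^[b] z' → a = b := by
  obtain ⟨x, hxap, hxball⟩ :=
    hdense.exists_mem_open Metric.isOpen_ball ⟨c, Metric.mem_ball_self hr⟩
  set Φ : X → (Fin (N+1) → X) := fun z k => (⇑T)^[(k : ℕ)] z with hΦdef
  have hΦ : Continuous Φ := continuous_pi fun k => T.continuous.iterate _
  set U : Set (Fin (N+1) → X) := {v | ∀ a b : Fin (N+1), v a = v b → a = b} with hUdef
  have hU : IsOpen U := by
    have : U = ⋂ (a : Fin (N+1)) (b : Fin (N+1)), {v | v a = v b → a = b} := by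
      ext v; simp [hUdef, Set.mem_iInter]
    rw [this]
    refine isOpen_iInter_of_finite fun a => isOpen_iInter_of_finite fun b => ?_
    by_cases hab : a = b
    · subst hab
      have : {v : Fin (N+1) → X | v a = v a → a = a} = Set.univ := by
        ext v; simp
      rw [this]; exact isOpen_univ
    · have : {v : Fin (N+1) → X | v a = v b → a = b} = {v | v a ≠ v b} := by
        ext v; constructor
        · intro h hv; exact hab (h hv)
        · intro h hv; exact absurd hv h
      rw [this]
      exact isOpen_ne_fun (continuous_apply a) (continuous_apply b)
  have hxU : Φ x ∈ U := by
    intro a b hab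
    rcases lt_trichotomy (a : ℕ) (b : ℕ) with h | h | h
    · exfalso
      have h1 : (⇑T)^[(b : ℕ) - a] ((⇑T)^[(a : ℕ)] x) = (⇑T)^[(a : ℕ)] x := by
        rw [← Function.iterate_add_apply]
        have : (b : ℕ) - a + a = b := Nat.sub_add_cancel h.le
        rw [this]; exact hab.symm
      have h2 : (⇑T)^[(a : ℕ)] ((⇑T)^[(b : ℕ) - a] x) = (⇑T)^[(a : ℕ)] x := by
        rw [← Function.iterate_add_apply, Nat.add_sub_cancel' h.le]
        · rw [← h1, ← Function.iterate_add_apply, Nat.sub_add_cancel h.le]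
      have h3 : (⇑T)^[(b : ℕ) - a] x = x := (T.injective.iterate (a : ℕ)) h2
      exact hxap ((b : ℕ) - a) (by omega) h3
    · exact Fin.ext h
    · exfalso
      have h1 : (⇑T)^[(a : ℕ) - b] ((⇑T)^[(b : ℕ)] x) = (⇑T)^[(b : ℕ)] x := by
        rw [← Function.iterate_add_apply]
        have : (a : ℕ) - b + b = a := Nat.sub_add_cancel h.le
        rw [this]; exact hab
      have h2 : (⇑T)^[(b : ℕ)] ((⇑T)^[(a : ℕ) - b] x) = (⇑T)^[(b : ℕ)] x := by
        rw [← Function.iterate_add_apply, Nat.add_sub_cancel' h.le]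
        rw [← h1, ← Function.iterate_add_apply, Nat.sub_add_cancel h.le]
      have h3 : (⇑T)^[(a : ℕ) - b] x = x := (T.injective.iterate (b : ℕ)) h2
      exact hxap ((a : ℕ) - b) (by omega) h3
  obtain ⟨ε, εpos, hballU⟩ := Metric.isOpen_iff.mp hU (Φ x) hxU
  obtain ⟨δ₀, δ₀pos, hδ₀⟩ := Metric.continuousAt_iff.mp hΦ.continuousAt ε εpos
  refine ⟨x, min δ₀ (r - dist x c), by
    have : 0 < r - dist x c := sub_pos.mpr (Metric.mem_ball.mp hxball)
    positivity, ?_, ?_⟩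
  · intro z hz
    rw [Metric.mem_ball] at hz ⊢
    have := lt_of_lt_of_le hz (min_le_right _ _)
    calc dist z c ≤ dist z x + dist x c := dist_triangle _ _ _
    _ < (r - dist x c) + dist x c := by linarith
    _ = r := by ring
  · intro z hz z' hz' a ha b hb hab
    by_cases h : a = b
    · exact h
    exfalso
    have hza : dist (Φ z) (Φ x) < ε :=
      hδ₀ (lt_of_lt_of_le (Metric.mem_ball.mp hz) (min_le_left _ _))
    have hz'a : dist (Φ z') (Φ x) < ε :=
      hδ₀ (lt_of_lt_of_le (Metric.mem_ball.mp hz') (min_le_left _ _))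
    set af : Fin (N+1) := ⟨a, by omega⟩
    set bf : Fin (N+1) := ⟨b, by omega⟩
    set v : Fin (N+1) → X := Function.update (Φ z) bf ((⇑T)^[b] z') with hvdef
    have hv : v ∈ Metric.ball (Φ x) ε := by
      rw [Metric.mem_ball, dist_pi_lt_iff εpos]
      intro k
      by_cases hk : k = bf
      · subst hk
        have : v bf = (⇑T)^[b] z' := Function.update_self _ _ _
        rw [this]
        have h1 : dist ((⇑T)^[b] z') (Φ x bf) ≤ dist (Φ z') (Φ x) := by
          have := dist_le_pi_dist (Φ z') (Φ x) bf
          simpa [hΦdef] using this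
        exact lt_of_le_of_lt h1 hz'a
      · have : v k = Φ z k := Function.update_of_ne hk _ _
        rw [this]
        exact lt_of_le_of_lt (dist_le_pi_dist (Φ z) (Φ x) k) hza
    have habf : af ≠ bf := fun hh => h (by simpa [af, bf] using congrArg Fin.val hh)
    have hva : v af = (⇑T)^[a] z := by
      rw [hvdef, Function.update_of_ne habf]
    have hvb : v bf = (⇑T)^[b] z' := Function.update_self _ _ _
    have : af = bf := hballU hv af bf (by rw [hva, hvb]; exact hab)
    exact habf this

/-- If the set of aperiodic points of a homeomorphism `T` of a compact metric space is dense,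
then there exists a nowhere dense set `A` intersecting every periodic orbit. -/
theorem stmt0 {X : Type*} [MetricSpace X] [CompactSpace X] (T : X ≃ₜ X)
    (hdense : Dense {x : X | ∀ n : ℕ, 1 ≤ n → (⇑T)^[n] x ≠ x}) :
    ∃ A : Set X, IsNowhereDense A ∧
      ∀ x : X, (∃ n : ℕ, 1 ≤ n ∧ (⇑T)^[n] x = x) → ∃ k : ℕ, (⇑T)^[k] x ∈ A := by
  classical
  rcases isEmpty_or_nonempty X with hX | hX
  · exact ⟨∅, isNowhereDense_empty, fun x => (IsEmpty.false x).elim⟩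
  have hsep : TopologicalSpace.SeparableSpace X := inferInstance
  set u : ℕ → X := TopologicalSpace.denseSeq X with hudef
  have hu : DenseRange u := TopologicalSpace.denseRange_denseSeq X
  set e : ℕ ≃ ℕ × ℕ := (Denumerable.eqv (ℕ × ℕ)).symm with hedef
  have hrpos : ∀ j : ℕ, (0:ℝ) < 1/((e j).2 + 1) := by
    intro j; positivity
  choose y δ hδpos hsub hsepr using fun j : ℕ =>
    key0 T hdense (u (e j).1) (1/((e j).2 + 1)) (hrpos j) (2^(j+2) - 1)
  set V : ℕ → Set X := fun j => Metric.ball (y j) (δ j) with hVdef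
  set W : Set X := ⋃ j, V j with hWdef
  have hWopen : IsOpen W := isOpen_iUnion fun j => Metric.isOpen_ball
  have hWdense : Dense W := by
    rw [Metric.dense_iff]
    intro x r hr
    obtain ⟨i, hi⟩ := Metric.denseRange_iff.mp hu x (r/2) (by positivity)
    obtain ⟨m, hm⟩ := exists_nat_one_div_lt (show (0:ℝ) < r/2 by positivity)
    set j : ℕ := e.symm (i, m) with hjdef
    have hej : e j = (i, m) := e.apply_symm_apply (i, m)
    refine ⟨y j, ?_, Set.mem_iUnion.mpr ⟨j, Metric.mem_ball_self (hδpos j)⟩⟩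
    have h1 : y j ∈ Metric.ball (u (e j).1) (1/((e j).2 + 1)) :=
      hsub j (Metric.mem_ball_self (hδpos j))
    rw [Metric.mem_ball] at h1 ⊢
    rw [hej] at h1
    calc dist (y j) x ≤ dist (y j) (u i) + dist (u i) x := dist_triangle _ _ _
    _ < 1/((m:ℝ)+1) + r/2 := by
        have := dist_comm x (u i) ▸ hi
        push_cast at h1 ⊢
        linarith
    _ < r/2 + r/2 := by linarith
    _ = r := by ring
  refine ⟨Wᶜ, ?_, ?_⟩
  · rw [IsClosed.isNowhereDense_iff hWopen.isClosed_compl,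
      interior_eq_empty_iff_dense_compl, compl_compl]
    exact hWdense
  · intro x ⟨n, hn1, hnx⟩
    by_contra hcon
    push_neg at hcon
    have hall : ∀ k : ℕ, (⇑T)^[k] x ∈ W := by
      intro k
      have := hcon k
      simpa using this
    have hper : Function.IsPeriodicPt (⇑T) n x := hnx
    set O : Finset X := (Finset.range n).image (fun k => (⇑T)^[k] x) with hOdef
    have hxO : x ∈ O := by
      rw [hOdef, Finset.mem_image]
      exact ⟨0, Finset.mem_range.mpr (by omega), rfl⟩
    set q : ℕ := O.card with hqdef
    have hq1 : 1 ≤ q := Finset.card_pos.mpr ⟨x, hxO⟩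
    have hOW : ∀ z ∈ O, z ∈ W := by
      intro z hz
      rw [hOdef, Finset.mem_image] at hz
      obtain ⟨k, _, rfl⟩ := hz
      exact hall k
    have hOinv : ∀ z ∈ O, ∀ a : ℕ, (⇑T)^[a] z ∈ O := by
      intro z hz a
      rw [hOdef, Finset.mem_image] at hz
      obtain ⟨k, hk, rfl⟩ := hz
      rw [← Function.iterate_add_apply]
      rw [hOdef, Finset.mem_image]
      refine ⟨(a + k) % n, Finset.mem_range.mpr (Nat.mod_lt _ (by omega)), ?_⟩
      exact hper.iterate_mod_apply (a + k)
    set c : ℕ → ℕ := fun j => (O.filter (fun z => z ∈ V j)).card with hcdef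
    have claim1 : ∀ j, c j * 2^(j+2) ≤ q := by
      intro j
      have hmap : ∀ p ∈ (O.filter (fun z => z ∈ V j)) ×ˢ Finset.range (2^(j+2)),
          (⇑T)^[p.2] p.1 ∈ O := by
        rintro ⟨z, a⟩ hp
        rw [Finset.mem_product] at hp
        exact hOinv z (Finset.mem_filter.mp hp.1).1 a
      have hinj : Set.InjOn (fun p : X × ℕ => (⇑T)^[p.2] p.1)
          (((O.filter (fun z => z ∈ V j)) ×ˢ Finset.range (2^(j+2)) : Finset (X × ℕ)) :
            Set (X × ℕ)) := by
        rintro ⟨z, a⟩ hp ⟨z', b⟩ hp' heq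
        simp only [Finset.coe_product, Set.mem_prod, Finset.mem_coe, Finset.mem_filter,
          Finset.mem_range, Finset.mem_product] at hp hp'
        have hab : a = b := by
          refine hsepr j z hp.1.2 z' hp'.1.2 a ?_ b ?_ heq
          · have := hp.2; omega
          · have := hp'.2; omega
        subst hab
        have hz : z = z' := (T.injective.iterate a) heq
        rw [hz]
      have := Finset.card_le_card_of_injOn _ hmap hinj
      rwa [Finset.card_product, Finset.card_range] at this
    have hcover : O ⊆ (Finset.range q).biUnion (fun j => O.filter (fun z => z ∈ V j)) := by
      intro z hz
      obtain ⟨j, hj⟩ := Set.mem_iUnion.mp (hOW z hz)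
      rw [Finset.mem_biUnion]
      refine ⟨j, Finset.mem_range.mpr ?_, Finset.mem_filter.mpr ⟨hz, hj⟩⟩
      by_contra hjM
      push_neg at hjM
      have h2 : q < 2^(j+2) := by
        calc q ≤ j := hjM
        _ < 2^j := Nat.lt_two_pow_self
        _ ≤ 2^(j+2) := Nat.pow_le_pow_right (by norm_num) (by omega)
      have h3 : 1 ≤ c j := Finset.card_pos.mpr ⟨z, Finset.mem_filter.mpr ⟨hz, hj⟩⟩
      have := claim1 j
      nlinarith
    have h4 : q ≤ ∑ j ∈ Finset.range q, c j :=
      le_trans (Finset.card_le_card hcover) (Finset.card_biUnion_le)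
    have h5 : (q:ℝ) ≤ ∑ j ∈ Finset.range q, (c j : ℝ) := by exact_mod_cast h4
    have h6 : ∀ j, (c j : ℝ) ≤ (q:ℝ) * (1/2)^(j+2) := by
      intro j
      have h2 : (c j : ℝ) * 2^(j+2) ≤ (q:ℝ) := by exact_mod_cast claim1 j
      have hpow : (0:ℝ) < 2^(j+2) := by positivity
      have h3 : ((1:ℝ)/2)^(j+2) = 1/2^(j+2) := by rw [div_pow, one_pow]
      rw [h3, mul_one_div, le_div_iff₀ hpow]
      exact h2
    have h7 : ∑ j ∈ Finset.range q, (c j : ℝ) ≤ (q:ℝ) / 2 := by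
      calc ∑ j ∈ Finset.range q, (c j : ℝ)
          ≤ ∑ j ∈ Finset.range q, (q:ℝ) * (1/2)^(j+2) :=
            Finset.sum_le_sum fun j _ => h6 j
      _ = (q:ℝ)/4 * ∑ j ∈ Finset.range q, (1/2:ℝ)^j := by
          rw [Finset.mul_sum]
          refine Finset.sum_congr rfl fun j _ => ?_
          rw [pow_add]
          ring
      _ ≤ (q:ℝ)/4 * 2 := by
          exact mul_le_mul_of_nonneg_left (sum_geometric_two_le q) (div_nonneg (Nat.cast_nonneg q) (by norm_num))
      _ = (q:ℝ)/2 := by ring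
    have hqpos : (0:ℝ) < q := by exact_mod_cast hq1
    linarith
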